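/- Let n ∈ ℤ₊ ∪ {∞}. Then φ is differentiable on (α,β) with φ′ extending to a function on [α,β] belonging to C_φ^{(n)} if and only if, for all 0 ≤ k ≤ n, the function φ is (k+1)-times differentiable on (α,β) and φ^k · ∂_t^{k+1} φ extends to a continuous function on [α,β]. -/

import Mathlib

open Real Set Filter Topology

/-- The open interval `(α, β)` of real numbers, where `α β` are extended reals. -/
def EI (α β : EReal) : Set ℝ := {x : ℝ | α < (x : EReal) ∧ (x : EReal) < β}

/-- `u : ℝ → ℝ` (thought of as a function on `(α, β)`) extends to a continuous
function on `[α, β] ⊆ EReal`. -/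
def ContExt (α β : EReal) (u : ℝ → ℝ) : Prop :=
  ∃ g : EReal → ℝ, ContinuousOn g (Set.Icc α β) ∧
    ∀ x : ℝ, x ∈ EI α β → g (x : EReal) = u x

/-- The operator `X u := φ · u′`. -/
noncomputable def Xop (φ u : ℝ → ℝ) : ℝ → ℝ := fun x => φ x * deriv u x

/-- The iterates `X^k u`. -/
noncomputable def Xiter (φ : ℝ → ℝ) : ℕ → (ℝ → ℝ) → (ℝ → ℝ)
  | 0, u => u
  | n + 1, u => Xop φ (Xiter φ n u)

/-- The space `C_φ^{(n)}`: inductively, `C_φ^{(0)}` consists of the functions having a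
continuous extension to `[α, β]`, and `u ∈ C_φ^{(n+1)}` iff `u ∈ C_φ^{(n)}`, `X^n u` is
differentiable on `(α, β)`, and `X^{n+1} u` extends to a continuous function on `[α, β]`. -/
def CN (α β : EReal) (φ : ℝ → ℝ) : ℕ → Set (ℝ → ℝ)
  | 0 => {u | ContExt α β u}
  | n + 1 => {u | u ∈ CN α β φ n ∧
      (∀ x ∈ EI α β, DifferentiableAt ℝ (Xiter φ n u) x) ∧
      ContExt α β (Xiter φ (n + 1) u)}

/-- The space `C_φ^{(∞)} := ⋂ₙ C_φ^{(n)}`. -/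
def Cinf (α β : EReal) (φ : ℝ → ℝ) : Set (ℝ → ℝ) := ⋂ n : ℕ, CN α β φ n

/-- The spaces `C_φ^{(n)}` for `n ∈ ℤ₊ ∪ {∞}`. -/
def CNE (α β : EReal) (φ : ℝ → ℝ) (n : ℕ∞) : Set (ℝ → ℝ) :=
  WithTop.recTopCoe (Cinf α β φ) (fun k => CN α β φ k) n

namespace CNAux

noncomputable def A (φ : ℝ → ℝ) (j : ℕ) : ℝ → ℝ := fun x => φ x ^ j * iteratedDeriv (j+1) φ x

inductive Nice (φ : ℝ → ℝ) : ℕ → (ℝ → ℝ) → Prop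
  | zero (K) : Nice φ K 0
  | base (j K) (h : j < K) : Nice φ K (A φ j)
  | add {K f g} : Nice φ K f → Nice φ K g → Nice φ K (f + g)
  | mul {K f g} : Nice φ K f → Nice φ K g → Nice φ K (f * g)
  | smul (c : ℝ) {K f} : Nice φ K f → Nice φ K (c • f)

theorem nice_mono {φ : ℝ → ℝ} {K K' : ℕ} {f} (h : Nice φ K f) (hK : K ≤ K') : Nice φ K' f := by
  induction h with
  | zero => exact Nice.zero _
  | base j K h => exact Nice.base j K' (lt_of_lt_of_le h hK)
  | add _ _ ih1 ih2 => exact Nice.add (ih1 hK) (ih2 hK)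
  | mul _ _ ih1 ih2 => exact Nice.mul (ih1 hK) (ih2 hK)
  | smul c _ ih => exact Nice.smul c (ih hK)

theorem isOpen_EI (α β : EReal) : IsOpen (EI α β) := by
  have : EI α β = ((↑) : ℝ → EReal) ⁻¹' (Set.Ioo α β) := rfl
  rw [this]
  exact isOpen_Ioo.preimage continuous_coe_real_ereal

section ContExtLemmas
variable {α β : EReal}

theorem contExt_congr {u v : ℝ → ℝ} (h : ∀ x ∈ EI α β, u x = v x) (hu : ContExt α β u) :
    ContExt α β v := by
  obtain ⟨g, hg, hgu⟩ := hu
  exact ⟨g, hg, fun x hx => (hgu x hx).trans (h x hx)⟩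

theorem contExt_zero : ContExt α β (0 : ℝ → ℝ) :=
  ⟨fun _ => 0, continuousOn_const, fun _ _ => rfl⟩

theorem contExt_add {u v : ℝ → ℝ} (hu : ContExt α β u) (hv : ContExt α β v) :
    ContExt α β (u + v) := by
  obtain ⟨g, hg, hgu⟩ := hu
  obtain ⟨g', hg', hgv⟩ := hv
  exact ⟨g + g', hg.add hg', fun x hx => by simp [hgu x hx, hgv x hx]⟩

theorem contExt_mul {u v : ℝ → ℝ} (hu : ContExt α β u) (hv : ContExt α β v) :
    ContExt α β (u * v) := by
  obtain ⟨g, hg, hgu⟩ := hu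
  obtain ⟨g', hg', hgv⟩ := hv
  exact ⟨g * g', hg.mul hg', fun x hx => by simp [hgu x hx, hgv x hx]⟩

theorem contExt_smul (c : ℝ) {u : ℝ → ℝ} (hu : ContExt α β u) : ContExt α β (c • u) := by
  obtain ⟨g, hg, hgu⟩ := hu
  exact ⟨c • g, hg.const_smul c, fun x hx => by simp [hgu x hx]⟩

theorem nice_contExt {φ : ℝ → ℝ} {K : ℕ} {E : ℝ → ℝ} (h : Nice φ K E)
    (hext : ∀ j < K, ContExt α β (A φ j)) : ContExt α β E := by
  induction h with
  | zero => exact contExt_zero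
  | base j K h => exact hext j h
  | add _ _ ih1 ih2 => exact contExt_add (ih1 hext) (ih2 hext)
  | mul _ _ ih1 ih2 => exact contExt_mul (ih1 hext) (ih2 hext)
  | smul c _ ih => exact contExt_smul c (ih hext)

/-- `ContExt (F + E) ↔ ContExt F` when `E` extends. -/
theorem contExt_add_iff {u E : ℝ → ℝ} (hE : ContExt α β E) :
    ContExt α β (fun x => u x + E x) ↔ ContExt α β u := by
  constructor
  · intro h
    have := contExt_add h (contExt_smul (-1 : ℝ) hE)
    exact contExt_congr (fun x _ => by simp) this
  · intro h
    exact contExt_add h hE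

end ContExtLemmas


section DiffLemmas
variable {α β : EReal} {φ : ℝ → ℝ}

theorem nice_diff {K : ℕ} {E : ℝ → ℝ} (h : Nice φ K E)
    (hD : ∀ i < K + 1, ∀ x ∈ EI α β, DifferentiableAt ℝ (iteratedDeriv i φ) x) :
    ∀ x ∈ EI α β, DifferentiableAt ℝ E x := by
  induction h with
  | zero => exact fun x _ => differentiableAt_const 0
  | base j K h =>
      intro x hx
      have hφ : DifferentiableAt ℝ φ x := by
        have := hD 0 (by omega) x hx; rwa [iteratedDeriv_zero] at this
      exact (hφ.pow j).mul (hD (j+1) (by omega) x hx)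
  | add _ _ ih1 ih2 => exact fun x hx => (ih1 hD x hx).add (ih2 hD x hx)
  | mul _ _ ih1 ih2 => exact fun x hx => (ih1 hD x hx).mul (ih2 hD x hx)
  | smul c _ ih => exact fun x hx => (ih hD x hx).const_smul c

/-- Key computation: `φ · (A j)′ = j · φ′ · A j + A (j+1)`. -/
theorem derivA (j : ℕ) {x : ℝ} (hφx : DifferentiableAt ℝ φ x)
    (hdx : DifferentiableAt ℝ (iteratedDeriv (j+1) φ) x) :
    φ x * deriv (A φ j) x = (j : ℝ) * (deriv φ x * A φ j x) + A φ (j+1) x := by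
  have hA : A φ j = fun y => (fun y => φ y ^ j) y * iteratedDeriv (j+1) φ y := rfl
  have hd2 : deriv (iteratedDeriv (j+1) φ) x = iteratedDeriv (j+2) φ x :=
    (congrFun (iteratedDeriv_succ (n := j+1)) x).symm
  rw [hA, deriv_fun_mul (c := fun y => φ y ^ j) (hφx.pow j) hdx, (hφx.hasDerivAt.fun_pow j).deriv, hd2]
  show φ x * (↑j * φ x ^ (j - 1) * deriv φ x * iteratedDeriv (j + 1) φ x
      + φ x ^ j * iteratedDeriv (j + 2) φ x)
    = (j:ℝ) * (deriv φ x * (φ x ^ j * iteratedDeriv (j+1) φ x))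
      + φ x ^ (j+1) * iteratedDeriv (j+1+1) φ x
  match j with
  | 0 => simp
  | (n+1) =>
      have : (n + 1 : ℕ) - 1 = n := rfl
      rw [this]
      push_cast
      ring

theorem niceX {K : ℕ} {E : ℝ → ℝ} (h : Nice φ K E)
    (hD : ∀ i < K + 2, ∀ x ∈ EI α β, DifferentiableAt ℝ (iteratedDeriv i φ) x) :
    ∃ E', Nice φ (K+1) E' ∧ ∀ x ∈ EI α β, φ x * deriv E x = E' x := by
  induction h with
  | zero K =>
      refine ⟨0, Nice.zero _, fun x hx => ?_⟩
      rw [show (0:ℝ→ℝ) = fun _ : ℝ => (0:ℝ) from rfl, deriv_const]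
      simp
  | base j K h =>
      refine ⟨(j:ℝ) • (A φ 0 * A φ j) + A φ (j+1), ?_, ?_⟩
      · exact Nice.add (Nice.smul _ (Nice.mul (Nice.base 0 _ (by omega))
          (Nice.base j _ (by omega)))) (Nice.base (j+1) _ (by omega))
      · intro x hx
        have hφx : DifferentiableAt ℝ φ x := by
          have := hD 0 (by omega) x hx; rwa [iteratedDeriv_zero] at this
        have hdx := hD (j+1) (by omega) x hx
        rw [derivA j hφx hdx]
        have hA0 : A φ 0 x = deriv φ x := by simp [A, iteratedDeriv_one]
        simp only [Pi.add_apply, Pi.smul_apply, Pi.mul_apply, smul_eq_mul, hA0]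
  | add h1 h2 ih1 ih2 =>
      rename_i K' f g
      obtain ⟨E1, hE1, he1⟩ := ih1 hD
      obtain ⟨E2, hE2, he2⟩ := ih2 hD
      refine ⟨E1 + E2, Nice.add hE1 hE2, fun x hx => ?_⟩
      have hf := nice_diff h1 (fun i hi => hD i (by omega)) x hx
      have hg := nice_diff h2 (fun i hi => hD i (by omega)) x hx
      have hadd : deriv (f + g) x = deriv f x + deriv g x := deriv_add hf hg
      rw [hadd, mul_add, he1 x hx, he2 x hx]; rfl
  | mul h1 h2 ih1 ih2 =>
      rename_i K' f g
      obtain ⟨E1, hE1, he1⟩ := ih1 hD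
      obtain ⟨E2, hE2, he2⟩ := ih2 hD
      refine ⟨f * E2 + g * E1,
        Nice.add (Nice.mul (nice_mono h1 (by omega)) hE2)
          (Nice.mul (nice_mono h2 (by omega)) hE1), fun x hx => ?_⟩
      have hf := nice_diff h1 (fun i hi => hD i (by omega)) x hx
      have hg := nice_diff h2 (fun i hi => hD i (by omega)) x hx
      have hmul : deriv (f * g) x = deriv f x * g x + f x * deriv g x := deriv_mul hf hg
      rw [hmul]
      simp only [Pi.add_apply, Pi.mul_apply]
      rw [← he1 x hx, ← he2 x hx]; ring
  | smul c h1 ih =>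
      rename_i K' f
      obtain ⟨E1, hE1, he1⟩ := ih hD
      refine ⟨c • E1, Nice.smul c hE1, fun x hx => ?_⟩
      have hf := nice_diff h1 (fun i hi => hD i (by omega)) x hx
      have hsm : deriv (c • f) x = c • deriv f x := deriv_const_smul c hf
      rw [hsm]
      simp only [Pi.smul_apply, smul_eq_mul]
      rw [← he1 x hx]; ring

theorem struct (k : ℕ)
    (hD : ∀ i < k + 1, ∀ x ∈ EI α β, DifferentiableAt ℝ (iteratedDeriv i φ) x) :
    ∃ E, Nice φ k E ∧ ∀ x ∈ EI α β, Xiter φ k (deriv φ) x = A φ k x + E x := by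
  induction k with
  | zero =>
      refine ⟨0, Nice.zero _, fun x hx => ?_⟩
      simp [Xiter, A, iteratedDeriv_one]
  | succ k ih =>
      obtain ⟨E, hE, heq⟩ := ih (fun i hi => hD i (by omega))
      have hφd : ∀ x ∈ EI α β, DifferentiableAt ℝ φ x := fun x hx => by
        have := hD 0 (by omega) x hx; rwa [iteratedDeriv_zero] at this
      have hAd : ∀ x ∈ EI α β, DifferentiableAt ℝ (A φ k) x := fun x hx =>
        ((hφd x hx).pow k).mul (hD (k+1) (by omega) x hx)
      have hEd : ∀ x ∈ EI α β, DifferentiableAt ℝ E x :=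
        nice_diff hE (fun i hi => hD i (by omega))
      obtain ⟨E', hE', heq'⟩ := niceX hE hD
      refine ⟨(k:ℝ) • (A φ 0 * A φ k) + E', ?_, ?_⟩
      · exact Nice.add (Nice.smul _ (Nice.mul (Nice.base 0 _ (by omega))
          (Nice.base k _ (by omega)))) hE'
      · intro x hx
        have hxeq : deriv (Xiter φ k (deriv φ)) x = deriv (fun y => A φ k y + E y) x :=
          Filter.EventuallyEq.deriv_eq
            (Filter.eventuallyEq_of_mem ((isOpen_EI α β).mem_nhds hx) heq)
        have h1 : Xiter φ (k+1) (deriv φ) x = φ x * deriv (Xiter φ k (deriv φ)) x := rfl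
        rw [h1, hxeq, deriv_fun_add (hAd x hx) (hEd x hx), mul_add,
          derivA k (hφd x hx) (hD (k+1) (by omega) x hx), heq' x hx]
        have hA0 : A φ 0 x = deriv φ x := by simp [A, iteratedDeriv_one]
        simp only [Pi.add_apply, Pi.smul_apply, Pi.mul_apply, smul_eq_mul, hA0]
        ring


theorem A_diff_iff (hφpos : ∀ x ∈ EI α β, 0 < φ x)
    (hφd : ∀ x ∈ EI α β, DifferentiableAt ℝ φ x) (k : ℕ) {x : ℝ} (hx : x ∈ EI α β) :
    DifferentiableAt ℝ (A φ k) x ↔ DifferentiableAt ℝ (iteratedDeriv (k+1) φ) x := by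
  constructor
  · intro hA
    have hne : φ x ^ k ≠ 0 := pow_ne_zero k (ne_of_gt (hφpos x hx))
    have hcand : DifferentiableAt ℝ (fun y => A φ k y * (φ y ^ k)⁻¹) x :=
      hA.mul (((hφd x hx).pow k).inv hne)
    apply hcand.congr_of_eventuallyEq
    apply Filter.eventuallyEq_of_mem ((isOpen_EI α β).mem_nhds hx)
    intro y hy
    have hne' : φ y ^ k ≠ 0 := pow_ne_zero k (ne_of_gt (hφpos y hy))
    show iteratedDeriv (k+1) φ y = A φ k y * (φ y ^ k)⁻¹
    rw [A]
    field_simp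
  · intro h
    exact ((hφd x hx).pow k).mul h

theorem main (hφpos : ∀ x ∈ EI α β, 0 < φ x)
    (hφd : ∀ x ∈ EI α β, DifferentiableAt ℝ φ x) (k : ℕ) :
    deriv φ ∈ CN α β φ k ↔ ∀ j ≤ k,
      (∀ i < j + 1, ∀ x ∈ EI α β, DifferentiableAt ℝ (iteratedDeriv i φ) x) ∧
      ContExt α β (A φ j) := by
  induction k with
  | zero =>
      simp only [CN, Set.mem_setOf_eq, Nat.le_zero]
      constructor
      · rintro h j rfl
        refine ⟨?_, ?_⟩
        · intro i hi x hx
          interval_cases i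
          rw [iteratedDeriv_zero]
          exact hφd x hx
        · exact contExt_congr (fun x _ => by simp [A, iteratedDeriv_one]) h
      · intro h
        exact contExt_congr (fun x _ => by simp [A, iteratedDeriv_one]) (h 0 rfl).2
  | succ k ih =>
      have hCN : deriv φ ∈ CN α β φ (k+1) ↔
          (deriv φ ∈ CN α β φ k ∧
            (∀ x ∈ EI α β, DifferentiableAt ℝ (Xiter φ k (deriv φ)) x) ∧
            ContExt α β (Xiter φ (k+1) (deriv φ))) := Iff.rfl
      rw [hCN]
      constructor
      · rintro ⟨hmem, hdiff, hext⟩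
        have hP := ih.mp hmem
        have hDk : ∀ i < k+1, ∀ x ∈ EI α β, DifferentiableAt ℝ (iteratedDeriv i φ) x :=
          (hP k le_rfl).1
        obtain ⟨E, hE, heq⟩ := struct k hDk
        have hEd := nice_diff hE (fun i hi => hDk i (by omega))
        have hnew : ∀ x ∈ EI α β, DifferentiableAt ℝ (iteratedDeriv (k+1) φ) x := by
          intro x hx
          have hXA : DifferentiableAt ℝ (fun y => A φ k y + E y) x := by
            apply (hdiff x hx).congr_of_eventuallyEq
            exact (Filter.eventuallyEq_of_mem ((isOpen_EI α β).mem_nhds hx) heq).symm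
          have hA : DifferentiableAt ℝ (A φ k) x := by
            have hfe : A φ k = fun y => (A φ k y + E y) - E y := by funext y; ring
            rw [hfe]
            exact hXA.sub (hEd x hx)
          exact (A_diff_iff hφpos hφd k hx).mp hA
        have hD' : ∀ i < k+2, ∀ x ∈ EI α β, DifferentiableAt ℝ (iteratedDeriv i φ) x := by
          intro i hi x hx
          rcases Nat.lt_or_ge i (k+1) with h' | h'
          · exact hDk i h' x hx
          · have : i = k+1 := by omega
            subst this
            exact hnew x hx
        obtain ⟨E1, hE1, heq1⟩ := struct (k+1) hD'
        have hE1ext : ContExt α β E1 :=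
          nice_contExt hE1 (fun j hj => (hP j (by omega)).2)
        have hAE : ContExt α β (fun x => A φ (k+1) x + E1 x) :=
          contExt_congr (fun x hx => heq1 x hx) hext
        have hAext : ContExt α β (A φ (k+1)) := (contExt_add_iff hE1ext).mp hAE
        intro j hj
        rcases Nat.lt_or_ge j (k+1) with h' | h'
        · exact hP j (by omega)
        · have : j = k+1 := by omega
          subst this
          exact ⟨hD', hAext⟩
      · intro h
        have hmem : deriv φ ∈ CN α β φ k := ih.mpr (fun j hj => h j (by omega))
        have hDk : ∀ i < k+1, ∀ x ∈ EI α β, DifferentiableAt ℝ (iteratedDeriv i φ) x :=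
          (h k (by omega)).1
        have hD' : ∀ i < k+2, ∀ x ∈ EI α β, DifferentiableAt ℝ (iteratedDeriv i φ) x :=
          (h (k+1) le_rfl).1
        obtain ⟨E, hE, heq⟩ := struct k hDk
        have hEd := nice_diff hE (fun i hi => hDk i (by omega))
        refine ⟨hmem, ?_, ?_⟩
        · intro x hx
          have hAE : DifferentiableAt ℝ (fun y => A φ k y + E y) x :=
            (((hφd x hx).pow k).mul (hD' (k+1) (by omega) x hx)).add (hEd x hx)
          exact hAE.congr_of_eventuallyEq
            (Filter.eventuallyEq_of_mem ((isOpen_EI α β).mem_nhds hx) heq)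
        · obtain ⟨E1, hE1, heq1⟩ := struct (k+1) hD'
          have hE1ext : ContExt α β E1 :=
            nice_contExt hE1 (fun j hj => (h j (by omega)).2)
          have hAext : ContExt α β (A φ (k+1)) := (h (k+1) le_rfl).2
          have hAE : ContExt α β (fun x => A φ (k+1) x + E1 x) :=
            (contExt_add_iff hE1ext).mpr hAext
          exact contExt_congr (fun x hx => (heq1 x hx).symm) hAE

end DiffLemmas
end CNAux

theorem deriv_mem_CN_iff (α β : EReal) (hαβ : α < β) (φ : ℝ → ℝ)
    (hφc : ContinuousOn φ (EI α β)) (hφpos : ∀ x ∈ EI α β, 0 < φ x)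
    (n : ℕ∞) :
    ((∀ x ∈ EI α β, DifferentiableAt ℝ φ x) ∧ deriv φ ∈ CNE α β φ n) ↔
      ∀ k : ℕ, (k : ℕ∞) ≤ n →
        (∀ i < k + 1, ∀ x ∈ EI α β, DifferentiableAt ℝ (iteratedDeriv i φ) x) ∧
          ContExt α β (fun x => φ x ^ k * iteratedDeriv (k + 1) φ x) := by
  have key : ∀ k : ℕ, ((∀ x ∈ EI α β, DifferentiableAt ℝ φ x) ∧ deriv φ ∈ CN α β φ k) ↔
      ∀ j ≤ k, (∀ i < j + 1, ∀ x ∈ EI α β, DifferentiableAt ℝ (iteratedDeriv i φ) x) ∧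
        ContExt α β (fun x => φ x ^ j * iteratedDeriv (j + 1) φ x) := by
    intro k
    constructor
    · rintro ⟨hφd, hmem⟩ j hj
      exact (CNAux.main hφpos hφd k).mp hmem j hj
    · intro h
      have hφd : ∀ x ∈ EI α β, DifferentiableAt ℝ φ x := by
        intro x hx
        have := (h 0 (Nat.zero_le k)).1 0 (by omega) x hx
        rwa [iteratedDeriv_zero] at this
      exact ⟨hφd, (CNAux.main hφpos hφd k).mpr (fun j hj => h j hj)⟩
  induction n using ENat.recTopCoe with
  | top =>
      have hCNE : CNE α β φ ⊤ = Cinf α β φ := rfl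
      rw [hCNE]
      constructor
      · rintro ⟨hφd, hmem⟩ k _
        exact ((key k).mp ⟨hφd, Set.mem_iInter.mp hmem k⟩) k le_rfl
      · intro h
        have hφd : ∀ x ∈ EI α β, DifferentiableAt ℝ φ x := by
          intro x hx
          have := (h 0 le_top).1 0 (by omega) x hx
          rwa [iteratedDeriv_zero] at this
        refine ⟨hφd, Set.mem_iInter.mpr fun k => ?_⟩
        exact ((key k).mpr (fun j _ => h j le_top)).2
  | coe m =>
      have hCNE : CNE α β φ (m : ℕ∞) = CN α β φ m := rfl
      rw [hCNE]
      constructor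
      · intro hh k hk
        exact (key m).mp hh k (Nat.cast_le.mp hk)
      · intro hh
        exact (key m).mpr (fun j hj => hh j (Nat.cast_le.mpr hj))
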